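/- Let σ be an edge 2-coloring of G and let e = (v, v') be an edge with cc(v) = {σ(e), c₁}, cc(v') = {σ(e), c₂}, where σ(e), c₁, c₂ are pairwise distinct (the 'connect' move condition). Let σ' be obtained from σ by recoloring e and all edges colored c₁ or c₂ with a single new color c_new not used by σ. Then σ' is an edge 2-coloring. -/

import Mathlib

open SimpleGraph Set

/-- The set of edges of `G` incident to a vertex `v`. -/
def incidentEdges {V : Type*} (G : SimpleGraph V) (v : V) : Set (Sym2 V) :=
  {e | e ∈ G.edgeSet ∧ v ∈ e}

/-- The set of colors appearing on edges of `G` incident to `v` (the color class `cc(v)`). -/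
def incidentColors {V C : Type*} (G : SimpleGraph V) (σ : Sym2 V → C) (v : V) : Set C :=
  σ '' incidentEdges G v

/-- An edge `q`-coloring: every vertex has at most `q` distinct incident colors. -/
def IsEdgeColoring {V C : Type*} (G : SimpleGraph V) (q : ℕ) (σ : Sym2 V → C) : Prop :=
  ∀ v : V, (incidentColors G σ v).Finite ∧ (incidentColors G σ v).ncard ≤ q

/-- The color class of a color `c`: the set of edges of `G` colored `c`. -/
def colorClass {V C : Type*} (G : SimpleGraph V) (σ : Sym2 V → C) (c : C) : Set (Sym2 V) :=
  {e | e ∈ G.edgeSet ∧ σ e = c}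

/-- The `connect` move preserves edge 2-colorings. -/
theorem stmt_7 {V C : Type*} {G : SimpleGraph V} (σ σ' : Sym2 V → C)
    (hσ : IsEdgeColoring G 2 σ) (v v' : V) (h : G.Adj v v') (c₁ c₂ cnew : C)
    (hv : incidentColors G σ v = {σ s(v, v'), c₁})
    (hv' : incidentColors G σ v' = {σ s(v, v'), c₂})
    (hd1 : σ s(v, v') ≠ c₁) (hd2 : σ s(v, v') ≠ c₂) (hd3 : c₁ ≠ c₂)
    (hnew : cnew ∉ σ '' G.edgeSet)
    (h1 : ∀ f ∈ G.edgeSet, (f = s(v, v') ∨ σ f = c₁ ∨ σ f = c₂) → σ' f = cnew)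
    (h2 : ∀ f ∈ G.edgeSet, ¬(f = s(v, v') ∨ σ f = c₁ ∨ σ f = c₂) → σ' f = σ f) :
    IsEdgeColoring G 2 σ' := by
  intro w
  obtain ⟨hfin, hcard⟩ := hσ w
  by_cases hre : ∃ f ∈ incidentEdges G w, f = s(v, v') ∨ σ f = c₁ ∨ σ f = c₂
  · -- some incident edge is recolored
    have hc : c₁ ∈ incidentColors G σ w ∨ c₂ ∈ incidentColors G σ w := by
      obtain ⟨f, hf, hcond⟩ := hre
      rcases hcond with rfl | hc1 | hc2
      · obtain ⟨he, hw⟩ := hf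
        rw [Sym2.mem_iff] at hw
        rcases hw with rfl | rfl
        · left; rw [hv]; right; rfl
        · right; rw [hv']; right; rfl
      · left; exact ⟨f, hf, hc1⟩
      · right; exact ⟨f, hf, hc2⟩
    have hsub : incidentColors G σ' w ⊆ insert cnew (incidentColors G σ w \ {c₁, c₂}) := by
      rintro c ⟨f, hf, rfl⟩
      by_cases hcond : f = s(v, v') ∨ σ f = c₁ ∨ σ f = c₂
      · rw [h1 f hf.1 hcond]; exact mem_insert _ _
      · rw [h2 f hf.1 hcond]
        push_neg at hcond
        exact Or.inr ⟨⟨f, hf, rfl⟩, by simp [hcond.2.1, hcond.2.2]⟩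
    have hdiff : (incidentColors G σ w \ {c₁, c₂}).ncard ≤ 1 := by
      rcases hc with hc | hc
      · have hsub2 : incidentColors G σ w \ {c₁, c₂} ⊆ incidentColors G σ w \ {c₁} := by
          intro x hx; exact ⟨hx.1, fun hx1 => hx.2 (by simp at hx1 ⊢; left; exact hx1)⟩
        have := Set.ncard_diff_singleton_add_one hc hfin
        have h3 := Set.ncard_le_ncard hsub2 (hfin.diff)
        omega
      · have hsub2 : incidentColors G σ w \ {c₁, c₂} ⊆ incidentColors G σ w \ {c₂} := by
          intro x hx; exact ⟨hx.1, fun hx1 => hx.2 (by simp at hx1 ⊢; right; exact hx1)⟩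
        have := Set.ncard_diff_singleton_add_one hc hfin
        have h3 := Set.ncard_le_ncard hsub2 (hfin.diff)
        omega
    have hfin' : (insert cnew (incidentColors G σ w \ {c₁, c₂})).Finite :=
      (hfin.diff).insert _
    refine ⟨hfin'.subset hsub, ?_⟩
    have := Set.ncard_le_ncard hsub hfin'
    have := Set.ncard_insert_le cnew (incidentColors G σ w \ {c₁, c₂})
    omega
  · -- no incident edge is recolored
    push_neg at hre
    have hsub : incidentColors G σ' w ⊆ incidentColors G σ w := by
      rintro c ⟨f, hf, rfl⟩
      rw [h2 f hf.1 (by push_neg; exact hre f hf)]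
      exact ⟨f, hf, rfl⟩
    exact ⟨hfin.subset hsub, le_trans (Set.ncard_le_ncard hsub hfin) hcard⟩
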